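/- Let m ≥ 2 and identify ℝ^m with ℝ^{m−1} × ℝ. If A ⊆ ℝ^{m−1} is a G_{δσ} set, then A × {0} ⊆ ℝ^m is a conical limit set; that is, there exists a subset E of the upper half-space over ℝ^m whose conical limit set equals {(a, 0) : a ∈ A}. -/

import Mathlib

open Filter Topology

section AuxCLS

open Metric Set Classical in
/-- Distance to the complement of `V`, patched to be `1` when the complement is empty. -/
noncomputable def dposCLS {X : Type*} [MetricSpace X] (V : Set X) (a : X) : ℝ :=
  if (Vᶜ).Nonempty then Metric.infDist a Vᶜ else 1

variable {X : Type*} [MetricSpace X]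

lemma dposCLS_nonneg (V : Set X) (a : X) : 0 ≤ dposCLS V a := by
  unfold dposCLS; split_ifs with h
  · exact Metric.infDist_nonneg
  · norm_num

lemma dposCLS_pos {V : Set X} (hV : IsOpen V) {a : X} (ha : a ∈ V) : 0 < dposCLS V a := by
  unfold dposCLS; split_ifs with h
  · exact (hV.isClosed_compl.notMem_iff_infDist_pos h).1 (by simpa using ha)
  · norm_num

lemma dposCLS_le_dist {V : Set X} {x : X} (hx : x ∈ Vᶜ) (a : X) : dposCLS V a ≤ dist a x := by
  unfold dposCLS
  rw [if_pos ⟨x, hx⟩]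
  exact Metric.infDist_le_dist_of_mem hx

lemma dposCLS_le_add (V : Set X) (x a : X) : dposCLS V x ≤ dposCLS V a + dist x a := by
  unfold dposCLS; split_ifs with h
  · exact Metric.infDist_le_infDist_add_dist
  · simpa using dist_nonneg

/-- Height function for the construction. -/
noncomputable def tauCLS (V : Set X) (k n : ℕ) (a : X) : ℝ :=
  min ((4:ℝ)⁻¹ ^ k) (min ((2:ℝ)⁻¹ ^ n) (dposCLS V a ^ 2))

lemma tauCLS_pos {V : Set X} (hV : IsOpen V) (k n : ℕ) {a : X} (ha : a ∈ V) :
    0 < tauCLS V k n a :=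
  lt_min (by positivity) (lt_min (by positivity) (by have := dposCLS_pos hV ha; positivity))

lemma tauCLS_le_fourk (V : Set X) (k n : ℕ) (a : X) : tauCLS V k n a ≤ (4:ℝ)⁻¹ ^ k :=
  min_le_left _ _

lemma tauCLS_le_twon (V : Set X) (k n : ℕ) (a : X) : tauCLS V k n a ≤ (2:ℝ)⁻¹ ^ n :=
  le_trans (min_le_right _ _) (min_le_left _ _)

lemma tauCLS_le_sq (V : Set X) (k n : ℕ) (a : X) : tauCLS V k n a ≤ dposCLS V a ^ 2 :=
  le_trans (min_le_right _ _) (min_le_right _ _)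

lemma tauCLS_mul_le_sqrt {V : Set X} {k n : ℕ} {a : X} (h0 : 0 ≤ tauCLS V k n a) :
    (k : ℝ) * tauCLS V k n a ≤ Real.sqrt (tauCLS V k n a) := by
  set t := tauCLS V k n a with ht
  have h4 : t ≤ ((2:ℝ)⁻¹ ^ k) ^ 2 := by
    have := tauCLS_le_fourk V k n a
    rw [← ht] at this
    calc t ≤ (4:ℝ)⁻¹ ^ k := this
    _ = ((2:ℝ)⁻¹ ^ k) ^ 2 := by rw [← pow_mul, pow_mul']; norm_num
  have hsq : Real.sqrt t ≤ (2:ℝ)⁻¹ ^ k := by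
    rw [show ((2:ℝ)⁻¹ ^ k) = Real.sqrt (((2:ℝ)⁻¹ ^ k) ^ 2) from (Real.sqrt_sq (by positivity)).symm]
    exact Real.sqrt_le_sqrt h4
  have hk2 : (k : ℝ) * (2:ℝ)⁻¹ ^ k ≤ 1 := by
    rw [inv_pow, mul_inv_le_iff₀ (by positivity), one_mul]
    exact_mod_cast (Nat.lt_two_pow_self (n := k)).le
  calc (k : ℝ) * t = (k : ℝ) * (Real.sqrt t * Real.sqrt t) := by rw [Real.mul_self_sqrt h0]
  _ ≤ (k : ℝ) * ((2:ℝ)⁻¹ ^ k * Real.sqrt t) := by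
      apply mul_le_mul_of_nonneg_left (mul_le_mul_of_nonneg_right hsq (Real.sqrt_nonneg _))
      positivity
  _ = ((k : ℝ) * (2:ℝ)⁻¹ ^ k) * Real.sqrt t := by ring
  _ ≤ 1 * Real.sqrt t := mul_le_mul_of_nonneg_right hk2 (Real.sqrt_nonneg _)
  _ = Real.sqrt t := one_mul _

/-- Pigeonhole for frequently: if frequently `P j` holds with `f j ≤ N`, then some value
`r ≤ N` is attained frequently together with `P`. -/
lemma freq_pigeonCLS {f : ℕ → ℕ} {N : ℕ} {P : ℕ → Prop}
    (h : ∃ᶠ j in atTop, P j ∧ f j ≤ N) :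
    ∃ r ≤ N, ∃ᶠ j in atTop, P j ∧ f j = r := by
  by_contra hcon
  push_neg at hcon
  have hev : ∀ r ∈ Finset.range (N + 1), ∀ᶠ j in atTop, ¬(P j ∧ f j = r) := by
    intro r hr
    have h' : r ≤ N := Nat.lt_succ_iff.1 (Finset.mem_range.1 hr)
    simpa [Filter.not_frequently] using (hcon r h')
  have hall := (Finset.eventually_all (Finset.range (N + 1))).2 hev
  obtain ⟨j, ⟨hP, hle⟩, hall'⟩ := (h.and_eventually hall).exists
  exact hall' (f j) (Finset.mem_range.2 (Nat.lt_succ_of_le hle)) ⟨hP, rfl⟩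

end AuxCLS

/-- The open upper half-space over a normed space `V`: pairs `(t, v)` with `t > 0`. -/
def upperHalf (V : Type*) [NormedAddCommGroup V] : Set (ℝ × V) := {p | 0 < p.1}

/-- The conical limit set of `E ⊆ ℝ × V`: points `x` for which there are `C > 0` and a
sequence `(t_n, v_n)` in `E` with `t_n → 0`, `v_n → x` and `‖v_n - x‖ ≤ C * t_n`. -/
def conicalLimitSet {V : Type*} [NormedAddCommGroup V] (E : Set (ℝ × V)) : Set V :=
  {x | ∃ C > 0, ∃ w : ℕ → ℝ × V, (∀ n, w n ∈ E) ∧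
    Tendsto (fun n => (w n).1) atTop (𝓝 (0 : ℝ)) ∧
    Tendsto (fun n => (w n).2) atTop (𝓝 x) ∧
    ∀ n, ‖(w n).2 - x‖ ≤ C * (w n).1}

/-- `X ⊆ V` is a conical limit set if it is the conical limit set of some subset of the
upper half-space. -/
def IsConicalLimitSet {V : Type*} [NormedAddCommGroup V] (X : Set V) : Prop :=
  ∃ E ⊆ upperHalf V, conicalLimitSet E = X

set_option maxHeartbeats 1000000 in
/-- For `m ≥ 2`, identifying `ℝ^m` with the Euclidean (`L²`) product `ℝ^(m-1) × ℝ`: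
every `G_{δσ}` subset `A` of `ℝ^(m-1)`, viewed inside the hyperplane `ℝ^(m-1) × {0}`,
is a conical limit set. -/
theorem Gdeltasigma_in_hyperplane_isConicalLimitSet (m : ℕ) (hm : 2 ≤ m)
    (A : Set (EuclideanSpace ℝ (Fin (m - 1))))
    (hA : ∃ B : ℕ → Set (EuclideanSpace ℝ (Fin (m - 1))),
      (∀ k, IsGδ (B k)) ∧ A = ⋃ k, B k) :
    ∃ E ⊆ upperHalf (WithLp 2 (EuclideanSpace ℝ (Fin (m - 1)) × ℝ)),
      conicalLimitSet E =
        (fun a => (WithLp.equiv 2 (EuclideanSpace ℝ (Fin (m - 1)) × ℝ)).symm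
          (a, (0 : ℝ))) '' A := by
  classical
  obtain ⟨B, hB, rfl⟩ := hA
  choose U hUopen hUeq using fun k => (hB k).eq_iInter_nat
  set V : ℕ → ℕ → Set (EuclideanSpace ℝ (Fin (m - 1))) := fun k n => ⋂ i ∈ Finset.range (n + 1), U k i with hGdefV
  have hVopen : ∀ k n, IsOpen (V k n) := fun k n =>
    isOpen_biInter_finset fun i _ => hUopen k i
  have hVanti : ∀ (k : ℕ) {n n' : ℕ}, n ≤ n' → V k n' ⊆ V k n := by
    intro k n n' h x hx
    simp only [hGdefV, Set.mem_iInter] at hx ⊢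
    intro i hi
    exact hx i (Finset.mem_range.2 (lt_of_lt_of_le (Finset.mem_range.1 hi) (by omega)))
  have hBV : ∀ k x, x ∈ B k ↔ ∀ n, x ∈ V k n := by
    intro k x
    rw [hUeq k]
    simp only [hGdefV, Set.mem_iInter]
    constructor
    · intro h n i _; exact h i
    · intro h i; exact h i i (Finset.self_mem_range_succ i)
  set e := ⇑(WithLp.equiv 2 (EuclideanSpace ℝ (Fin (m - 1)) × ℝ)).symm with he
  set T : ℕ → ℕ → EuclideanSpace ℝ (Fin (m - 1)) → ℝ := fun k n a => tauCLS (V k n) k n a with hT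
  set E : Set (ℝ × WithLp 2 (EuclideanSpace ℝ (Fin (m - 1)) × ℝ)) :=
    {p | ∃ k n a, a ∈ V k n ∧ p = (T k n a, e (a, (k : ℝ) * T k n a))} with hE
  -- norm facts
  have hnorm : ∀ u : EuclideanSpace ℝ (Fin (m - 1)) × ℝ, ‖e u‖ = Real.sqrt (‖u.1‖ ^ 2 + ‖u.2‖ ^ 2) := fun u =>
    WithLp.prod_norm_eq_of_L2 _
  have hsub : ∀ u v : EuclideanSpace ℝ (Fin (m - 1)) × ℝ, e u - e v = e (u - v) := fun u v =>
    (WithLp.toLp_sub 2 u v).symm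
  have hfst_le : ∀ u : EuclideanSpace ℝ (Fin (m - 1)) × ℝ, ‖u.1‖ ≤ ‖e u‖ := by
    intro u
    rw [hnorm]
    calc ‖u.1‖ = Real.sqrt (‖u.1‖ ^ 2) := (Real.sqrt_sq (norm_nonneg _)).symm
    _ ≤ _ := Real.sqrt_le_sqrt (le_add_of_nonneg_right (by positivity))
  have hsnd_le : ∀ u : EuclideanSpace ℝ (Fin (m - 1)) × ℝ, |u.2| ≤ ‖e u‖ := by
    intro u
    rw [hnorm, ← Real.norm_eq_abs]
    calc ‖u.2‖ = Real.sqrt (‖u.2‖ ^ 2) := (Real.sqrt_sq (norm_nonneg _)).symm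
    _ ≤ _ := Real.sqrt_le_sqrt (le_add_of_nonneg_left (by positivity))
  have hzero : ∀ s : ℝ, ‖e ((0 : EuclideanSpace ℝ (Fin (m - 1))), s)‖ = |s| := by
    intro s
    rw [hnorm]
    simp [Real.sqrt_sq_eq_abs]
  refine ⟨E, ?_, ?_⟩
  · rintro p ⟨k, n, a, ha, rfl⟩
    exact tauCLS_pos (hVopen k n) k n ha
  · ext ξ
    constructor
    · -- conical limit set ⊆ A × {0}
      rintro ⟨C, hC, w, hmem, ht0, hwsnd, hbd⟩
      have hmem' : ∀ j, ∃ k n a, a ∈ V k n ∧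
          w j = (T k n a, e (a, (k : ℝ) * T k n a)) := hmem
      choose k n a hmemV hw using hmem'
      set x₀ := (WithLp.equiv 2 (EuclideanSpace ℝ (Fin (m - 1)) × ℝ) ξ).1 with hx₀
      set s₀ := (WithLp.equiv 2 (EuclideanSpace ℝ (Fin (m - 1)) × ℝ) ξ).2 with hs₀def
      have hξ : ξ = e (x₀, s₀) := rfl
      set τ : ℕ → ℝ := fun j => T (k j) (n j) (a j) with hτdef
      have hτ1 : ∀ j, (w j).1 = τ j := fun j => by rw [hw j]
      have hτpos : ∀ j, 0 < τ j := fun j => tauCLS_pos (hVopen _ _) _ _ (hmemV j)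
      have ht0' : Tendsto τ atTop (𝓝 0) := ht0.congr hτ1
      have hdiff : ∀ j, (w j).2 - ξ = e (a j - x₀, (k j : ℝ) * τ j - s₀) := by
        intro j
        rw [hξ, hw j, hsub]
        rfl
      have hfst : ∀ j, dist (a j) x₀ ≤ C * τ j := by
        intro j
        calc dist (a j) x₀ = ‖a j - x₀‖ := dist_eq_norm _ _
        _ ≤ ‖e (a j - x₀, (k j : ℝ) * τ j - s₀)‖ := hfst_le (a j - x₀, (k j : ℝ) * τ j - s₀)
        _ = ‖(w j).2 - ξ‖ := by rw [hdiff j]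
        _ ≤ C * (w j).1 := hbd j
        _ = C * τ j := by rw [hτ1 j]
      have hsndb : ∀ j, |(k j : ℝ) * τ j - s₀| ≤ C * τ j := by
        intro j
        calc |(k j : ℝ) * τ j - s₀|
            ≤ ‖e (a j - x₀, (k j : ℝ) * τ j - s₀)‖ := hsnd_le (a j - x₀, (k j : ℝ) * τ j - s₀)
        _ = ‖(w j).2 - ξ‖ := by rw [hdiff j]
        _ ≤ C * (w j).1 := hbd j
        _ = C * τ j := by rw [hτ1 j]
      have hs0 : s₀ = 0 := by
        have hub : ∀ j, |s₀| ≤ C * τ j + Real.sqrt (τ j) := by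
          intro j
          have h1 : (k j : ℝ) * τ j ≤ Real.sqrt (τ j) :=
            tauCLS_mul_le_sqrt (hτpos j).le
          have h2 := hsndb j
          have h3 : |s₀| - |(k j : ℝ) * τ j| ≤ |s₀ - (k j : ℝ) * τ j| :=
            abs_sub_abs_le_abs_sub _ _
          rw [abs_sub_comm] at h3
          have h4 : |(k j : ℝ) * τ j| = (k j : ℝ) * τ j :=
            abs_of_nonneg (mul_nonneg (Nat.cast_nonneg _) (hτpos j).le)
          linarith
        have hlim : Tendsto (fun j => C * τ j + Real.sqrt (τ j)) atTop (𝓝 0) := by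
          have h1 : Tendsto (fun j => C * τ j) atTop (𝓝 0) := by
            simpa using ht0'.const_mul C
          have h2 : Tendsto (fun j => Real.sqrt (τ j)) atTop (𝓝 0) := by
            simpa using ht0'.sqrt
          simpa using h1.add h2
        have h0 : |s₀| ≤ 0 := ge_of_tendsto' hlim hub
        exact abs_eq_zero.1 (le_antisymm h0 (abs_nonneg _))
      have hkC : ∀ j, k j ≤ ⌊C⌋₊ := by
        intro j
        have h := hsndb j
        rw [hs0, sub_zero, abs_of_nonneg (mul_nonneg (Nat.cast_nonneg _) (hτpos j).le)] at h
        exact Nat.le_floor (le_of_mul_le_mul_right h (hτpos j))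
      obtain ⟨K, hKle, hfreqK⟩ := freq_pigeonCLS (f := k) (N := ⌊C⌋₊)
        (P := fun _ => True) (Filter.Frequently.of_forall fun j => ⟨trivial, hkC j⟩)
      have hxB : x₀ ∈ B K := by
        rw [hBV]
        intro n₀
        by_contra hx
        obtain ⟨N, hNn₀, hfreq⟩ := freq_pigeonCLS (f := fun j => min (n j) n₀)
          (N := n₀) (P := fun j => k j = K) (by
            refine hfreqK.mono ?_
            rintro j ⟨-, hkj⟩
            exact ⟨hkj, min_le_right _ _⟩)
        by_cases hxW : x₀ ∈ V K N
        · have hNlt : N < n₀ := lt_of_le_of_ne hNn₀ (fun h => hx (h ▸ hxW))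
          set δ₀ := dposCLS (V K N) x₀ with hδ₀
          have hδ₀pos : 0 < δ₀ := dposCLS_pos (hVopen K N) hxW
          set ε := min ((4:ℝ)⁻¹ ^ K) (min ((2:ℝ)⁻¹ ^ N) ((δ₀ / 2) ^ 2)) with hεdef
          have hεpos : 0 < ε :=
            lt_min (by positivity) (lt_min (by positivity) (by positivity))
          have hev : ∀ᶠ j in atTop, τ j < ε ∧ C * τ j < δ₀ / 2 := by
            refine (ht0'.eventually_lt_const hεpos).and ?_
            have h1 : Tendsto (fun j => C * τ j) atTop (𝓝 0) := by
              simpa using ht0'.const_mul C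
            exact h1.eventually_lt_const (by positivity)
          obtain ⟨j, ⟨hkj, hminj⟩, hτε, hCτ⟩ := (hfreq.and_eventually hev).exists
          have hnj : n j = N := by omega
          have hτj : τ j = tauCLS (V K N) K N (a j) := by
            rw [hτdef]
            simp only [hT]
            rw [hkj, hnj]
          have hsmall : dposCLS (V K N) (a j) < δ₀ / 2 := by
            by_contra hge
            push_neg at hge
            have hle2 : ε ≤ τ j := by
              rw [hτj, hεdef]
              unfold tauCLS
              refine min_le_min le_rfl (min_le_min le_rfl ?_)
              exact pow_le_pow_left₀ (by positivity) hge 2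
            exact absurd hτε (not_lt.2 hle2)
          have hcontr : δ₀ ≤ dposCLS (V K N) (a j) + dist x₀ (a j) :=
            dposCLS_le_add _ _ _
          rw [dist_comm] at hcontr
          have hd := hfst j
          linarith
        · have hev : ∀ᶠ j in atTop, C * τ j < C⁻¹ := by
            have h1 : Tendsto (fun j => C * τ j) atTop (𝓝 0) := by
              simpa using ht0'.const_mul C
            exact h1.eventually_lt_const (by positivity)
          obtain ⟨j, ⟨hkj, hminj⟩, hCτ⟩ := (hfreq.and_eventually hev).exists
          have hnjN : N ≤ n j := by omega
          have hxc : x₀ ∈ (V K (n j))ᶜ := fun hmem => hxW (hVanti K hnjN hmem)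
          set δ := dposCLS (V K (n j)) (a j) with hδdef
          have haj : a j ∈ V K (n j) := by rw [← hkj]; exact hmemV j
          have hδpos : 0 < δ := dposCLS_pos (hVopen _ _) haj
          have h1 : δ ≤ dist (a j) x₀ := dposCLS_le_dist hxc (a j)
          have h2 : dist (a j) x₀ ≤ C * τ j := hfst j
          have h3 : τ j ≤ δ ^ 2 := by
            have := tauCLS_le_sq (V K (n j)) K (n j) (a j)
            rw [hτdef]
            simp only [hT]
            rw [hkj]
            exact this
          have h4 : δ ≤ C * δ ^ 2 := by
            refine le_trans h1 (le_trans h2 ?_)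
            exact mul_le_mul_of_nonneg_left h3 hC.le
          have h5 : 1 ≤ C * δ := by nlinarith
          have h6 : C⁻¹ ≤ δ := by
            calc C⁻¹ = C⁻¹ * 1 := (mul_one _).symm
            _ ≤ C⁻¹ * (C * δ) := by
                exact mul_le_mul_of_nonneg_left h5 (by positivity)
            _ = δ := by field_simp
          linarith
      exact ⟨x₀, Set.mem_iUnion.2 ⟨K, hxB⟩, by rw [hξ, hs0]⟩
    · -- A × {0} ⊆ conical limit set
      rintro ⟨x, hxA, rfl⟩
      obtain ⟨K, hxK⟩ := Set.mem_iUnion.1 hxA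
      have hxV : ∀ n, x ∈ V K n := (hBV K x).1 hxK
      have hTpos : ∀ n, 0 < T K n x := fun n => tauCLS_pos (hVopen K n) K n (hxV n)
      have hT2 : ∀ n, T K n x ≤ (2:ℝ)⁻¹ ^ n := fun n => tauCLS_le_twon _ _ _ _
      have hpow : Tendsto (fun n : ℕ => ((2:ℝ)⁻¹) ^ n) atTop (𝓝 0) :=
        tendsto_pow_atTop_nhds_zero_of_lt_one (by norm_num) (by norm_num)
      have heq : ∀ nn : ℕ, dist (e (x, (K : ℝ) * T K nn x)) (e (x, (0:ℝ)))
          = (K : ℝ) * T K nn x := by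
        intro nn
        rw [dist_eq_norm, hsub]
        have hpair : (x, (K : ℝ) * T K nn x) - (x, (0:ℝ))
            = (0, (K : ℝ) * T K nn x) := by
          rw [Prod.mk_sub_mk, sub_self, sub_zero]
        rw [hpair, hzero, abs_of_nonneg (mul_nonneg (Nat.cast_nonneg _) (hTpos nn).le)]
      refine ⟨(K : ℝ) + 2, by positivity,
        fun nn => (T K nn x, e (x, (K : ℝ) * T K nn x)),
        fun nn => ⟨K, nn, x, hxV nn, rfl⟩, ?_, ?_, ?_⟩
      · exact squeeze_zero (fun nn => (hTpos nn).le) hT2 hpow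
      · rw [tendsto_iff_dist_tendsto_zero]
        simp only [heq]
        have hb : ∀ nn : ℕ, (K : ℝ) * T K nn x ≤ (K : ℝ) * (2:ℝ)⁻¹ ^ nn := fun nn =>
          mul_le_mul_of_nonneg_left (hT2 nn) (Nat.cast_nonneg K)
        refine squeeze_zero (fun nn => mul_nonneg (Nat.cast_nonneg _) (hTpos nn).le) hb ?_
        simpa using hpow.const_mul (K : ℝ)
      · intro nn
        have hn := heq nn
        rw [dist_eq_norm] at hn
        rw [hn]
        have : (K : ℝ) ≤ (K : ℝ) + 2 := by linarith
        exact mul_le_mul_of_nonneg_right this (hTpos nn).le
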